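/- arXiv:0808.1291 — 4 statements merged into one kernel-verified Lean document; each statement's English description precedes it below -/
import Mathlib

section
/- For each non-negative integer M, the coefficient α_M evaluated at s = 2M+1 satisfies α_M(2M+1) = π^(2M) · (1/2)_M / M!, where (1/2)_M = (1/2)(3/2)···(M-1/2) is the Pochhammer symbol. -/
open PowerSeries Metric

/-- `sinc z = sin (π z)/(π z)` (`= 1` at `z = 0`). -/
noncomputable def sinc (z : ℂ) : ℂ :=
  if z = 0 then 1 else Complex.sin (Real.pi * z) / (Real.pi * z)

/-- Uniqueness of power series coefficients on the unit ball. -/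
lemma coeffs_eq_zero {a : ℕ → ℂ}
    (h : ∀ z ∈ Metric.ball (0:ℂ) 1, HasSum (fun n => a n * z ^ n) 0) :
    ∀ n, a n = 0 := by
  set p := FormalMultilinearSeries.ofScalars ℂ a with hp
  have hc : ∀ n, p.coeff n = a n := by
    intro n
    show (a n • ContinuousMultilinearMap.mkPiAlgebraFin ℂ n ℂ) 1 = a n
    simp [List.prod_ofFn]
  have hzero : HasFPowerSeriesAt (0 : ℂ → ℂ) p 0 := by
    rw [hasFPowerSeriesAt_iff]
    filter_upwards [Metric.ball_mem_nhds (0:ℂ) one_pos] with z hz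
    simpa [hc, smul_eq_mul, mul_comm] using h z hz
  have h0 := hzero.eq_zero
  intro n
  rw [← hc n, h0]
  simp [FormalMultilinearSeries.coeff]

/-- `P` represents `f` on the unit ball (with absolute convergence). -/
def RepS (P : PowerSeries ℂ) (f : ℂ → ℂ) : Prop :=
  ∀ z ∈ Metric.ball (0:ℂ) 1,
    Summable (fun n => ‖PowerSeries.coeff n P‖ * ‖z‖ ^ n) ∧
    HasSum (fun n => PowerSeries.coeff n P * z ^ n) (f z)

lemma RepS.unique {P Q : PowerSeries ℂ} {f : ℂ → ℂ} (hp : RepS P f) (hq : RepS Q f) :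
    P = Q := by
  have h0 : ∀ n, PowerSeries.coeff n P - PowerSeries.coeff n Q = 0 := by
    apply coeffs_eq_zero
    intro z hz
    simpa [sub_mul] using ((hp z hz).2.sub (hq z hz).2)
  ext n
  exact sub_eq_zero.mp (h0 n)

lemma RepS.congr {P : PowerSeries ℂ} {f g : ℂ → ℂ} (hp : RepS P f)
    (hfg : ∀ z ∈ Metric.ball (0:ℂ) 1, f z = g z) : RepS P g := by
  intro z hz
  exact ⟨(hp z hz).1, hfg z hz ▸ (hp z hz).2⟩

lemma RepS.mul {P Q : PowerSeries ℂ} {f g : ℂ → ℂ} (hp : RepS P f) (hq : RepS Q g) :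
    RepS (P * Q) (fun z => f z * g z) := by
  intro z hz
  obtain ⟨hps, hph⟩ := hp z hz
  obtain ⟨hqs, hqh⟩ := hq z hz
  have ha : Summable fun n => ‖PowerSeries.coeff n P * z ^ n‖ := by
    simpa [norm_mul, norm_pow] using hps
  have hb : Summable fun n => ‖PowerSeries.coeff n Q * z ^ n‖ := by
    simpa [norm_mul, norm_pow] using hqs
  have key : ∀ n : ℕ, ∑ kl ∈ Finset.HasAntidiagonal.antidiagonal n,
      (PowerSeries.coeff kl.1 P * z ^ kl.1) * (PowerSeries.coeff kl.2 Q * z ^ kl.2)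
      = PowerSeries.coeff n (P * Q) * z ^ n := by
    intro n
    rw [PowerSeries.coeff_mul, Finset.sum_mul]
    apply Finset.sum_congr rfl
    intro kl hkl
    have : kl.1 + kl.2 = n := Finset.HasAntidiagonal.mem_antidiagonal.mp hkl
    rw [← this, pow_add]; ring
  have hsum : Summable fun n => ‖PowerSeries.coeff n (P * Q) * z ^ n‖ := by
    have := summable_norm_sum_mul_antidiagonal_of_summable_norm ha hb
    simpa [key] using this
  constructor
  · simpa [norm_mul, norm_pow] using hsum
  · have ht := tsum_mul_tsum_eq_tsum_sum_antidiagonal_of_summable_norm ha hb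
    rw [hph.tsum_eq, hqh.tsum_eq] at ht
    have h2 : ∑' n, PowerSeries.coeff n (P * Q) * z ^ n = f z * g z := by
      rw [ht]; exact (tsum_congr fun n => (key n)).symm
    have := hsum.of_norm.hasSum
    rwa [h2] at this

lemma RepS.C (c : ℂ) : RepS (PowerSeries.C c) (fun _ => c) := by
  intro z hz
  constructor
  · apply summable_of_ne_finset_zero (s := {0})
    intro n hn
    simp only [Finset.mem_singleton] at hn
    simp [PowerSeries.coeff_C, hn]
  · have : HasSum (fun n => PowerSeries.coeff n (PowerSeries.C c) * z ^ n)
        (PowerSeries.coeff 0 (PowerSeries.C c) * z ^ 0) := by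
      apply hasSum_single
      intro b hb
      simp [PowerSeries.coeff_C, hb]
    simpa using this

lemma RepS.X : RepS PowerSeries.X (fun z => z) := by
  intro z hz
  constructor
  · apply summable_of_ne_finset_zero (s := {1})
    intro n hn
    simp only [Finset.mem_singleton] at hn
    simp [PowerSeries.coeff_X, hn]
  · have : HasSum (fun n => PowerSeries.coeff n (PowerSeries.X) * z ^ n)
        (PowerSeries.coeff 1 (PowerSeries.X : PowerSeries ℂ) * z ^ 1) := by
      apply hasSum_single
      intro b hb
      simp [PowerSeries.coeff_X, hb]
    simpa using this

lemma RepS.one : RepS 1 (fun _ => 1) := by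
  have := RepS.C 1
  rwa [map_one] at this

lemma RepS.pow {P : PowerSeries ℂ} {f : ℂ → ℂ} (hp : RepS P f) (k : ℕ) :
    RepS (P ^ k) (fun z => f z ^ k) := by
  induction k with
  | zero => simpa using RepS.one
  | succ n ih =>
      have := ih.mul hp
      simpa [pow_succ] using this

noncomputable def Sser : PowerSeries ℂ :=
  PowerSeries.mk fun n => if Even n then 0 else (-1) ^ (n / 2) * (Real.pi : ℂ) ^ n / n.factorial

noncomputable def Cser : PowerSeries ℂ :=
  PowerSeries.mk fun n => if Even n then (-1) ^ (n / 2) * (Real.pi : ℂ) ^ n / n.factorial else 0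

noncomputable def Tser : PowerSeries ℂ :=
  PowerSeries.mk fun n => PowerSeries.coeff (n + 1) Sser

noncomputable def Aser (α : ℕ → ℂ → ℂ) (s : ℂ) : PowerSeries ℂ :=
  PowerSeries.mk fun n => if Even n then α (n / 2) s else 0

lemma repS_Sser : RepS Sser (fun z => Complex.sin (Real.pi * z)) := by
  intro z hz
  have hz1 : ‖z‖ < 1 := by simpa using hz
  have hinj : Function.Injective (fun k : ℕ => 2 * k + 1) := by
    intro a b h; dsimp at h; omega
  have hoff : ∀ n, n ∉ Set.range (fun k : ℕ => 2 * k + 1) →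
      PowerSeries.coeff n Sser = 0 := by
    intro n hn
    rcases Nat.even_or_odd n with h | h
    · simp [Sser, PowerSeries.coeff_mk, h]
    · obtain ⟨k, hk⟩ := h
      exact absurd ⟨k, by dsimp; omega⟩ hn
  constructor
  · refine Summable.of_nonneg_of_le (fun n => by positivity) (fun n => ?_)
      (Real.summable_pow_div_factorial Real.pi)
    have h1 : ‖PowerSeries.coeff n Sser‖ ≤ Real.pi ^ n / n.factorial := by
      rw [Sser, PowerSeries.coeff_mk]
      split_ifs with h
      · simp; positivity
      · rw [norm_div, norm_mul, norm_pow, norm_pow]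
        simp [abs_of_pos Real.pi_pos]
    calc ‖PowerSeries.coeff n Sser‖ * ‖z‖ ^ n
        ≤ (Real.pi ^ n / n.factorial) * 1 ^ n := by
          apply mul_le_mul h1 (pow_le_pow_left₀ (norm_nonneg z) hz1.le n)
            (by positivity) (by positivity)
      _ = Real.pi ^ n / n.factorial := by simp
  · rw [← Function.Injective.hasSum_iff hinj
      (by intro n hn; simp [hoff n hn])]
    convert Complex.hasSum_sin (Real.pi * z) using 1
    funext k
    have he : ¬ Even (2 * k + 1) := by simp [Nat.even_add_one, parity_simps]
    have hd : (2 * k + 1) / 2 = k := by omega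
    show PowerSeries.coeff (2 * k + 1) Sser * z ^ (2 * k + 1) = _
    rw [Sser, PowerSeries.coeff_mk, if_neg he, hd, mul_pow]
    ring

lemma summable_even_aux {a : ℕ → ℂ} {f : ℂ → ℂ}
    (h : ∀ z ∈ Metric.ball (0:ℂ) 1, HasSum (fun n => a n * z ^ (2 * n)) (f z))
    {z : ℂ} (hz : z ∈ Metric.ball (0:ℂ) 1) :
    Summable (fun n => ‖a n‖ * ‖z‖ ^ (2 * n)) := by
  have hz1 : ‖z‖ < 1 := by simpa using hz
  have h0 : (0:ℝ) ≤ ‖z‖ := norm_nonneg z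
  set t : ℝ := (‖z‖ + 1) / 2 with ht
  clear_value t
  have hzt : ‖z‖ < t := by rw [ht]; linarith
  have ht1 : t < 1 := by rw [ht]; linarith
  have ht0 : 0 < t := by rw [ht]; linarith
  have htb : (t : ℂ) ∈ Metric.ball (0:ℂ) 1 := by
    simp only [Metric.mem_ball, dist_zero_right, Complex.norm_real]
    rw [Real.norm_eq_abs, abs_of_pos ht0]; exact ht1
  have hs := (h _ htb).summable
  have htend : Filter.Tendsto (fun n => ‖a n * (t:ℂ) ^ (2 * n)‖) Filter.atTop (nhds 0) := by
    simpa using hs.tendsto_atTop_zero.norm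
  obtain ⟨D, hD⟩ := htend.bddAbove_range
  rw [mem_upperBounds] at hD
  have hDb : ∀ n, ‖a n‖ * t ^ (2 * n) ≤ D := by
    intro n
    have := hD _ (Set.mem_range_self n)
    rwa [norm_mul, norm_pow, Complex.norm_real, Real.norm_eq_abs, abs_of_pos ht0] at this
  have hr0 : 0 ≤ (‖z‖ / t) ^ 2 := by positivity
  have hr1 : (‖z‖ / t) ^ 2 < 1 := by
    apply pow_lt_one₀ (by positivity) _ (by norm_num)
    rw [div_lt_one ht0]; exact hzt
  refine Summable.of_nonneg_of_le (fun n => by positivity) (fun n => ?_)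
    ((summable_geometric_of_lt_one hr0 hr1).mul_left D)
  have key : ‖a n‖ * ‖z‖ ^ (2 * n) = (‖a n‖ * t ^ (2 * n)) * ((‖z‖ / t) ^ 2) ^ n := by
    have htne : t ≠ 0 := ne_of_gt ht0
    rw [← pow_mul, mul_comm 2 n, mul_comm n 2, div_pow]
    field_simp
  rw [key]
  exact mul_le_mul_of_nonneg_right (hDb n) (by positivity)

lemma repS_Aser (α : ℕ → ℂ → ℂ) (s : ℂ) (g : ℂ → ℂ)
    (hα : ∀ z ∈ Metric.ball (0 : ℂ) 1, HasSum (fun n => α n s * z ^ (2 * n))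
      (Complex.exp (-s * g z))) :
    RepS (Aser α s) (fun z => Complex.exp (-s * g z)) := by
  intro z hz
  have hinj : Function.Injective (fun k : ℕ => 2 * k) := by
    intro a b h; dsimp at h; omega
  have hoff : ∀ n, n ∉ Set.range (fun k : ℕ => 2 * k) →
      PowerSeries.coeff n (Aser α s) = 0 := by
    intro n hn
    have hne : ¬ Even n := by
      intro hev
      obtain ⟨k, hk⟩ := hev
      exact hn ⟨k, by dsimp; omega⟩
    simp [Aser, PowerSeries.coeff_mk, hne]
  have hcomp : ∀ k, PowerSeries.coeff (2 * k) (Aser α s) = α k s := by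
    intro k
    have hev : Even (2 * k) := ⟨k, by omega⟩
    have hd : 2 * k / 2 = k := by omega
    rw [Aser, PowerSeries.coeff_mk, if_pos hev, hd]
  constructor
  · rw [← Function.Injective.summable_iff hinj
      (f := fun n => ‖PowerSeries.coeff n (Aser α s)‖ * ‖z‖ ^ n)
      (by intro n hn; simp [hoff n hn])]
    have hkey := summable_even_aux hα hz
    convert hkey using 1
    funext k
    simp [Function.comp, hcomp k, pow_mul]
  · rw [← Function.Injective.hasSum_iff hinj
      (by intro n hn; simp [hoff n hn])]
    convert hα z hz using 1
    funext k
    simp [Function.comp, hcomp k]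

lemma sin_eq_sinc (z : ℂ) : Complex.sin (Real.pi * z) = sinc z * (Real.pi * z) := by
  unfold sinc
  split_ifs with h
  · simp [h]
  · rw [div_mul_cancel₀]
    simp [h, Complex.ofReal_ne_zero, Real.pi_ne_zero]

lemma fun_eq_aux (g : ℂ → ℂ) (hge : ∀ z ∈ Metric.ball (0 : ℂ) 1, Complex.exp (g z) = sinc z)
    (k : ℕ) (z : ℂ) (hz : z ∈ Metric.ball (0:ℂ) 1) :
    Complex.exp (-(((2*k+1 : ℕ) : ℂ)) * g z) * (Complex.sin (Real.pi * z)) ^ (2*k+1)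
      = ((Real.pi : ℂ) * z) ^ (2*k+1) := by
  have h1 : (Complex.sin (Real.pi * z)) ^ (2*k+1) = (sinc z) ^ (2*k+1) * ((Real.pi:ℂ) * z) ^ (2*k+1) := by
    rw [sin_eq_sinc, mul_pow]
  have h2 : (sinc z) ^ (2*k+1) = Complex.exp (((2*k+1:ℕ):ℂ) * g z) := by
    rw [← hge z hz, ← Complex.exp_nat_mul]
  rw [h1, h2, ← mul_assoc, ← Complex.exp_add]
  rw [show -(((2*k+1 : ℕ) : ℂ)) * g z + ((2*k+1:ℕ):ℂ) * g z = 0 by ring]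
  simp

lemma S_eq_X_mul_T : Sser = PowerSeries.X * Tser := by
  ext n
  cases n with
  | zero =>
      simp [Sser, PowerSeries.coeff_mk, PowerSeries.coeff_zero_eq_constantCoeff, map_mul,
        PowerSeries.constantCoeff_X]
  | succ n =>
      rw [PowerSeries.coeff_succ_X_mul]
      simp [Tser, PowerSeries.coeff_mk]

lemma keyT (g : ℂ → ℂ) (hge : ∀ z ∈ Metric.ball (0 : ℂ) 1, Complex.exp (g z) = sinc z)
    (α : ℕ → ℂ → ℂ)
    (hα : ∀ s : ℂ, ∀ z ∈ Metric.ball (0 : ℂ) 1,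
      HasSum (fun n => α n s * z ^ (2 * n)) (Complex.exp (-s * g z)))
    (k : ℕ) :
    Aser α ((2*k+1 : ℕ) : ℂ) * Tser ^ (2*k+1)
      = PowerSeries.C ((Real.pi : ℂ) ^ (2*k+1)) := by
  set s : ℂ := ((2*k+1 : ℕ) : ℂ) with hs
  have hP : Aser α s * Sser ^ (2*k+1) = (PowerSeries.C (Real.pi:ℂ) * PowerSeries.X) ^ (2*k+1) := by
    apply RepS.unique (f := fun z => ((Real.pi:ℂ) * z) ^ (2*k+1))
    · have hA := repS_Aser α s g (hα s)
      have := hA.mul (repS_Sser.pow (2*k+1))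
      apply this.congr
      intro z hz
      exact fun_eq_aux g hge k z hz
    · have := ((RepS.C (Real.pi:ℂ)).mul RepS.X).pow (2*k+1)
      apply this.congr
      intro z hz
      rfl
  have hX : (PowerSeries.X : PowerSeries ℂ) ^ (2*k+1) ≠ 0 :=
    pow_ne_zero _ PowerSeries.X_ne_zero
  apply mul_right_cancel₀ hX
  calc Aser α s * Tser ^ (2*k+1) * PowerSeries.X ^ (2*k+1)
      = Aser α s * Sser ^ (2*k+1) := by rw [S_eq_X_mul_T, mul_pow]; ring
    _ = (PowerSeries.C (Real.pi:ℂ) * PowerSeries.X) ^ (2*k+1) := hP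
    _ = PowerSeries.C ((Real.pi:ℂ) ^ (2*k+1)) * PowerSeries.X ^ (2*k+1) := by
        rw [mul_pow, ← map_pow]

lemma factorial_cast_ne (n : ℕ) : ((n.factorial : ℂ)) ≠ 0 :=
  Nat.cast_ne_zero.mpr (Nat.factorial_ne_zero n)

lemma dS_eq : d⁄dX ℂ Sser = PowerSeries.C (Real.pi:ℂ) * Cser := by
  ext n
  rw [PowerSeries.coeff_derivative, PowerSeries.coeff_C_mul]
  simp only [Sser, Cser, PowerSeries.coeff_mk]
  rcases Nat.even_or_odd n with h | h
  · have h1 : ¬ Even (n + 1) := by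
      rw [Nat.even_add_one]; exact not_not_intro h
    rw [if_neg h1, if_pos h]
    have hd : (n + 1) / 2 = n / 2 := by
      obtain ⟨k, hk⟩ := h; omega
    rw [hd, Nat.factorial_succ]
    have hne : ((n.factorial : ℂ)) ≠ 0 := factorial_cast_ne n
    have hne2 : ((n:ℂ) + 1) ≠ 0 := by
      have : ((n+1 : ℕ) : ℂ) ≠ 0 := Nat.cast_ne_zero.mpr (Nat.succ_ne_zero n)
      push_cast at this; exact this
    push_cast
    field_simp
    ring
  · have h0 : ¬ Even n := Nat.not_even_iff_odd.mpr h
    have h1 : Even (n + 1) := Nat.even_add_one.mpr h0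
    rw [if_pos h1, if_neg h0]
    simp

lemma dC_eq : d⁄dX ℂ Cser = -(PowerSeries.C (Real.pi:ℂ) * Sser) := by
  ext n
  rw [PowerSeries.coeff_derivative]
  simp only [Cser, Sser, PowerSeries.coeff_mk, map_neg, PowerSeries.coeff_C_mul]
  rcases Nat.even_or_odd n with h | h
  · have h1 : ¬ Even (n + 1) := by
      rw [Nat.even_add_one]; exact not_not_intro h
    rw [if_neg h1, if_pos h]
    simp
  · have h0 : ¬ Even n := Nat.not_even_iff_odd.mpr h
    have h1 : Even (n + 1) := Nat.even_add_one.mpr h0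
    rw [if_pos h1, if_neg h0]
    have hd : (n + 1) / 2 = n / 2 + 1 := by
      obtain ⟨k, hk⟩ := h; omega
    rw [hd, Nat.factorial_succ, pow_succ]
    have hne : ((n.factorial : ℂ)) ≠ 0 := factorial_cast_ne n
    have hne2 : ((n:ℂ) + 1) ≠ 0 := by
      have : ((n+1 : ℕ) : ℂ) ≠ 0 := Nat.cast_ne_zero.mpr (Nat.succ_ne_zero n)
      push_cast at this; exact this
    push_cast
    field_simp
    ring

lemma constantCoeff_Sser : PowerSeries.constantCoeff Sser = 0 := by
  rw [← PowerSeries.coeff_zero_eq_constantCoeff]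
  simp [Sser, PowerSeries.coeff_mk]

lemma constantCoeff_Cser : PowerSeries.constantCoeff Cser = 1 := by
  rw [← PowerSeries.coeff_zero_eq_constantCoeff]
  simp [Cser, PowerSeries.coeff_mk]

lemma pyth : Sser ^ 2 + Cser ^ 2 = 1 := by
  apply PowerSeries.derivative.ext
  · rw [map_add, pow_two, pow_two, Derivation.leibniz, Derivation.leibniz, dS_eq, dC_eq]
    simp only [smul_eq_mul]
    rw [show d⁄dX ℂ (1 : PowerSeries ℂ) = 0 from Derivation.map_one_eq_zero _]
    ring
  · rw [map_add, map_pow, map_pow, constantCoeff_Sser, constantCoeff_Cser, map_one]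
    norm_num

lemma constantCoeff_Tser : PowerSeries.constantCoeff Tser = (Real.pi : ℂ) := by
  rw [← PowerSeries.coeff_zero_eq_constantCoeff]
  simp only [Tser, PowerSeries.coeff_mk, Sser]
  norm_num

lemma constantCoeff_Tser_ne : PowerSeries.constantCoeff Tser ≠ 0 := by
  rw [constantCoeff_Tser]
  exact_mod_cast Complex.ofReal_ne_zero.mpr Real.pi_ne_zero

lemma Tser_ne_zero : Tser ≠ 0 := by
  intro h
  apply constantCoeff_Tser_ne
  rw [h, map_zero]

lemma TX_eq : Tser + PowerSeries.X * d⁄dX ℂ Tser = PowerSeries.C (Real.pi:ℂ) * Cser := by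
  have := dS_eq
  rw [S_eq_X_mul_T, Derivation.leibniz] at this
  rw [smul_eq_mul, smul_eq_mul, PowerSeries.derivative_X, mul_one] at this
  rw [add_comm] at this
  exact this

lemma recur (M : ℕ) :
    ((2*M+2 : ℕ) : ℂ) * (Real.pi:ℂ)^2 * PowerSeries.coeff (2*M+2) (Tser⁻¹ ^ (2*M+3))
    = ((2*M+1 : ℕ) : ℂ) * (Real.pi:ℂ)^2 * PowerSeries.coeff (2*M) (Tser⁻¹ ^ (2*M+1)) := by
  set π : ℂ := (Real.pi : ℂ) with hπ
  set Ti : PowerSeries ℂ := Tser⁻¹ with hTi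
  have hTiT : Tser * Ti = 1 := PowerSeries.mul_inv_cancel Tser constantCoeff_Tser_ne
  have hpow : ∀ a b : ℕ, Ti ^ a * Tser ^ (a + b) = Tser ^ b := by
    intro a b
    rw [pow_add, ← mul_assoc, ← mul_pow, mul_comm Ti Tser, hTiT, one_pow, one_mul]
  have h1 : Ti ^ (2*M+3) * Tser ^ (2*M+3) = 1 := by
    have := hpow (2*M+3) 0
    simpa using this
  have h2 : Ti ^ (2*M+2) * Tser ^ (2*M+3) = Tser := by
    have := hpow (2*M+2) 1
    simpa using this
  have h3 : Ti ^ (2*M+1) * Tser ^ (2*M+3) = Tser ^ 2 := by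
    have := hpow (2*M+1) 2
    rwa [show 2*M+1+2 = 2*M+3 from rfl] at this
  have hdTi : d⁄dX ℂ Ti = -Ti^2 * d⁄dX ℂ Tser := PowerSeries.derivative_inv' Tser
  have hdTipow : d⁄dX ℂ (Ti^(2*M+2))
      = -(((2*M+2:ℕ)) : PowerSeries ℂ) * Ti^(2*M+3) * d⁄dX ℂ Tser := by
    rw [Derivation.leibniz_pow, hdTi]
    rw [show (2*M+2) - 1 = 2*M+1 from rfl]
    simp only [nsmul_eq_mul, smul_eq_mul]
    rw [show (2*M+3) = (2*M+1) + 2 from rfl, pow_add]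
    push_cast
    ring
  have hdpiC : d⁄dX ℂ (PowerSeries.C π * Cser)
      = -(PowerSeries.C (π^2)) * PowerSeries.X * Tser := by
    rw [Derivation.leibniz, PowerSeries.derivative_C, dC_eq, S_eq_X_mul_T]
    simp only [smul_eq_mul, mul_zero, add_zero]
    rw [pow_two, map_mul]
    ring
  set Wt : PowerSeries ℂ := (PowerSeries.C π * Cser) * Ti^(2*M+2) with hWt
  have hdW : d⁄dX ℂ Wt
      = -(PowerSeries.C (π^2)) * PowerSeries.X * Tser * Ti^(2*M+2)
        + (PowerSeries.C π * Cser) *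
          (-(((2*M+2:ℕ)) : PowerSeries ℂ) * Ti^(2*M+3) * d⁄dX ℂ Tser) := by
    rw [hWt, Derivation.leibniz, hdTipow, hdpiC]
    simp only [smul_eq_mul]
    ring
  have hpyth2 : (PowerSeries.C π * Cser)^2
      = PowerSeries.C (π^2)
        - PowerSeries.C (π^2) * PowerSeries.X^2 * Tser^2 := by
    have hc2 : Cser^2 = 1 - Sser^2 := by linear_combination pyth
    rw [mul_pow, ← map_pow, hc2, S_eq_X_mul_T, mul_pow]
    ring
  have hc : (((2*M+1:ℕ)) : PowerSeries ℂ) + 1 = (((2*M+2:ℕ)) : PowerSeries ℂ) := by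
    push_cast; ring
  have hEq : (((2*M+2:ℕ)) : PowerSeries ℂ) * PowerSeries.C (π^2) * Ti^(2*M+3)
      = (((2*M+1:ℕ)) : PowerSeries ℂ) * PowerSeries.C (π^2) *
          (PowerSeries.X^2 * Ti^(2*M+1))
        - (PowerSeries.X * d⁄dX ℂ Wt - (((2*M+2:ℕ)) : PowerSeries ℂ) * Wt) := by
    apply mul_right_cancel₀ (pow_ne_zero (2*M+3) Tser_ne_zero)
    rw [hdW, hWt]
    linear_combination
      ((((2*M+2:ℕ)) : PowerSeries ℂ) * PowerSeries.C (π^2)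
        - (((2*M+2:ℕ)) : PowerSeries ℂ) * PowerSeries.X * (PowerSeries.C π * Cser)
            * d⁄dX ℂ Tser) * h1
      - (PowerSeries.C (π^2) * PowerSeries.X^2 * Tser
          + (((2*M+2:ℕ)) : PowerSeries ℂ) * (PowerSeries.C π * Cser)) * h2
      - (((2*M+1:ℕ)) : PowerSeries ℂ) * PowerSeries.C (π^2) * PowerSeries.X^2 * h3
      - (((2*M+2:ℕ)) : PowerSeries ℂ) * (PowerSeries.C π * Cser) * TX_eq
      - (((2*M+2:ℕ)) : PowerSeries ℂ) * hpyth2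
      - PowerSeries.C (π^2) * PowerSeries.X^2 * Tser^2 * hc
  -- extract coefficient 2M+2
  have hcast : ∀ k : ℕ, ((k : ℕ) : PowerSeries ℂ) = PowerSeries.C (k : ℂ) := by
    intro k
    rw [← map_natCast (PowerSeries.C (R := ℂ)) k]
  have := congrArg (PowerSeries.coeff (2*M+2)) hEq
  rw [hcast, hcast] at this
  rw [map_sub, map_sub] at this
  rw [mul_assoc, PowerSeries.coeff_C_mul, PowerSeries.coeff_C_mul] at this
  rw [mul_assoc, PowerSeries.coeff_C_mul, PowerSeries.coeff_C_mul] at this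
  rw [PowerSeries.coeff_X_pow_mul (Ti^(2*M+1)) 2 (2*M)] at this
  rw [show (2*M+2) = (2*M+1)+1 from rfl] at this
  rw [PowerSeries.coeff_succ_X_mul, PowerSeries.coeff_derivative,
    PowerSeries.coeff_C_mul] at this
  rw [show (2*M+1)+1 = 2*M+2 from rfl] at this
  push_cast at this ⊢
  linear_combination this

lemma r_formula (M : ℕ) : PowerSeries.coeff (2*M) (Tser⁻¹ ^ (2*M+1))
    = (∏ i ∈ Finset.range M, ((1:ℂ)/2 + i)) / ((M.factorial : ℂ) * (Real.pi:ℂ)) := by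
  have hπ : (Real.pi:ℂ) ≠ 0 := Complex.ofReal_ne_zero.mpr Real.pi_ne_zero
  induction M with
  | zero =>
      show PowerSeries.coeff 0 (Tser⁻¹ ^ 1) = _
      rw [pow_one, PowerSeries.coeff_zero_eq_constantCoeff, PowerSeries.constantCoeff_inv,
        constantCoeff_Tser]
      simp [one_div]
  | succ M ih =>
      have h := recur M
      rw [ih] at h
      have hfac : ((M.factorial : ℂ)) ≠ 0 := factorial_cast_ne M
      have h2M2 : ((2*M+2:ℕ):ℂ) ≠ 0 := Nat.cast_ne_zero.mpr (by omega)
      have hM1 : ((M:ℂ)+1) ≠ 0 := by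
        have : ((M+1 : ℕ):ℂ) ≠ 0 := Nat.cast_ne_zero.mpr (Nat.succ_ne_zero M)
        push_cast at this; exact this
      rw [show 2*(M+1) = 2*M+2 by omega, show 2*M+2+1 = 2*M+3 from rfl]
      rw [Finset.prod_range_succ, Nat.factorial_succ]
      have h' : ((2:ℂ)*M+2) * PowerSeries.coeff (2*M+2) (Tser⁻¹ ^ (2*M+3))
          = ((2:ℂ)*M+1) * ((∏ i ∈ Finset.range M, ((1:ℂ)/2 + i)) / ((M.factorial : ℂ) * (Real.pi:ℂ))) := by
        apply mul_left_cancel₀ (pow_ne_zero 2 hπ)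
        push_cast at h
        linear_combination h
      have h2 : ((2:ℂ)*M+2) ≠ 0 := by
        have : ((2*M+2:ℕ):ℂ) ≠ 0 := Nat.cast_ne_zero.mpr (by omega)
        push_cast at this; exact this
      push_cast
      field_simp at h' ⊢
      linear_combination h'

/-- `α M (2M+1) = π^(2M) (1/2)_M / M!`, where `(1/2)_M` is the Pochhammer symbol. -/
theorem sinc_coeff_at_odd
    (g : ℂ → ℂ) (hg : AnalyticOn ℂ g (Metric.ball 0 1)) (hg0 : g 0 = 0)
    (hge : ∀ z ∈ Metric.ball (0 : ℂ) 1, Complex.exp (g z) = sinc z)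
    (α : ℕ → ℂ → ℂ)
    (hα : ∀ s : ℂ, ∀ z ∈ Metric.ball (0 : ℂ) 1,
      HasSum (fun n => α n s * z ^ (2 * n)) (Complex.exp (-s * g z)))
    (M : ℕ) :
    α M (2 * M + 1)
      = (Real.pi : ℂ) ^ (2 * M) * (∏ i ∈ Finset.range M, ((1 : ℂ) / 2 + i))
          / (Nat.factorial M) := by
  have hπ : (Real.pi:ℂ) ≠ 0 := Complex.ofReal_ne_zero.mpr Real.pi_ne_zero
  set s : ℂ := ((2*M+1 : ℕ) : ℂ) with hs
  have hscast : (2 * (M:ℂ) + 1) = s := by rw [hs]; push_cast; ring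
  rw [hscast]
  have hTiT : Tser * Tser⁻¹ = 1 := PowerSeries.mul_inv_cancel Tser constantCoeff_Tser_ne
  have hA : Aser α s = PowerSeries.C ((Real.pi:ℂ)^(2*M+1)) * Tser⁻¹ ^ (2*M+1) := by
    calc Aser α s = Aser α s * (Tser ^ (2*M+1) * Tser⁻¹ ^ (2*M+1)) := by
          rw [← mul_pow, hTiT, one_pow, mul_one]
      _ = (Aser α s * Tser ^ (2*M+1)) * Tser⁻¹ ^ (2*M+1) := by ring
      _ = PowerSeries.C ((Real.pi:ℂ)^(2*M+1)) * Tser⁻¹ ^ (2*M+1) := by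
          rw [keyT g hge α hα M]
  have hcoeff : α M s = PowerSeries.coeff (2*M) (Aser α s) := by
    have hev : Even (2*M) := ⟨M, by omega⟩
    have hd : 2*M/2 = M := by omega
    rw [Aser, PowerSeries.coeff_mk, if_pos hev, hd]
  rw [hcoeff, hA, PowerSeries.coeff_C_mul, r_formula M]
  have hfac : ((M.factorial : ℂ)) ≠ 0 := factorial_cast_ne M
  field_simp
  ring
end

section
/- For real s with -2 < s < 1 and s ≠ 0, the mean value (1/(2π)) ∫_0^{2π} |1 - e^{iφ}|^(-s) dφ equals 2^(-s) · Γ((1-s)/2) / (√π · Γ(1 - s/2)). -/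
open Real

open MeasureTheory Set


lemma aux_beta_real (u : ℝ) (hu : 0 < u) :
    ∫ x in Ioo (0:ℝ) 1, x ^ (u - 1) * (1 - x) ^ (u - 1) =
      Real.Gamma u ^ 2 / Real.Gamma (2 * u) := by
  have h2u : 0 < Real.Gamma (2 * u) := Real.Gamma_pos_of_pos (by linarith)
  have key : Complex.Gamma u * Complex.Gamma u =
      Complex.Gamma ((u : ℂ) + u) * Complex.betaIntegral u u :=
    Complex.Gamma_mul_Gamma_eq_betaIntegral (by simpa using hu) (by simpa using hu)
  have hbeta : Complex.betaIntegral u u =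
      ((∫ x in (0:ℝ)..1, x ^ (u - 1) * (1 - x) ^ (u - 1) : ℝ) : ℂ) := by
    rw [Complex.betaIntegral, ← intervalIntegral.integral_ofReal]
    refine intervalIntegral.integral_congr fun x hx => ?_
    rw [uIcc_of_le zero_le_one] at hx
    rw [Complex.ofReal_mul, Complex.ofReal_cpow hx.1 (u-1),
      Complex.ofReal_cpow (show (0:ℝ) ≤ 1 - x by linarith [hx.2]) (u-1)]
    push_cast
    ring
  have hsum : ((u : ℂ) + u) = ((2 * u : ℝ) : ℂ) := by push_cast; ring
  rw [hsum, Complex.Gamma_ofReal, Complex.Gamma_ofReal, hbeta, ← Complex.ofReal_mul,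
    ← Complex.ofReal_mul, Complex.ofReal_inj] at key
  have : (∫ x in (0:ℝ)..1, x ^ (u - 1) * (1 - x) ^ (u - 1)) =
      Real.Gamma u ^ 2 / Real.Gamma (2 * u) := by
    field_simp
    rw [sq]
    rw [mul_comm (2:ℝ) u] at key
    linarith [key]
  rw [← this, intervalIntegral.integral_of_le zero_le_one,
    MeasureTheory.integral_Ioc_eq_integral_Ioo]

lemma aux_sin_rpow (p : ℝ) (hp : -1 < p) :
    ∫ θ in Ioo (0:ℝ) π, Real.sin θ ^ p =
      Real.sqrt π * Real.Gamma ((p + 1) / 2) / Real.Gamma (p / 2 + 1) := by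
  have hπ := pi_pos
  set u : ℝ := (p + 1) / 2 with hu_def
  have hu : 0 < u := by simp only [hu_def]; linarith
  -- change of variables x = sin(θ/2)^2
  set f : ℝ → ℝ := fun θ => Real.sin (θ / 2) ^ 2 with hf_def
  set f' : ℝ → ℝ := fun θ => Real.sin (θ / 2) * Real.cos (θ / 2) with hf'_def
  have hderiv : ∀ θ ∈ Ioo (0:ℝ) π, HasDerivWithinAt f (f' θ) (Ioo (0:ℝ) π) θ := by
    intro θ _
    have h1 : HasDerivAt (fun θ : ℝ => θ / 2) (1 / 2) θ := (hasDerivAt_id θ).div_const 2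
    have h2 : HasDerivAt (fun θ : ℝ => Real.sin (θ / 2)) (Real.cos (θ / 2) * (1 / 2)) θ :=
      by have := (Real.hasDerivAt_sin (θ / 2)).comp θ h1; exact this
    have h3 := h2.fun_pow 2
    refine HasDerivAt.hasDerivWithinAt ?_
    convert h3 using 1
    case e'_4 => rfl
    simp only [hf'_def]
    push_cast
    ring
  have hmem : ∀ θ ∈ Ioo (0:ℝ) π, θ / 2 ∈ Icc (-(π/2)) (π/2) :=
    fun θ hθ => ⟨by linarith [hθ.1], by linarith [hθ.2]⟩
  have hsinpos : ∀ θ ∈ Ioo (0:ℝ) π, 0 < Real.sin (θ / 2) :=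
    fun θ hθ => Real.sin_pos_of_pos_of_lt_pi (by linarith [hθ.1]) (by linarith [hθ.2])
  have hcospos : ∀ θ ∈ Ioo (0:ℝ) π, 0 < Real.cos (θ / 2) :=
    fun θ hθ => Real.cos_pos_of_mem_Ioo ⟨by linarith [hθ.1], by linarith [hθ.2]⟩
  have hinj : InjOn f (Ioo (0:ℝ) π) := by
    intro a ha b hb hab
    have h1 : Real.sin (a / 2) = Real.sin (b / 2) := by
      rw [← Real.sqrt_sq (hsinpos a ha).le, ← Real.sqrt_sq (hsinpos b hb).le]
      exact congrArg Real.sqrt hab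
    have := Real.strictMonoOn_sin.injOn (hmem a ha) (hmem b hb) h1
    linarith
  have himg : f '' Ioo (0:ℝ) π = Ioo (0:ℝ) 1 := by
    ext x
    constructor
    · rintro ⟨θ, hθ, rfl⟩
      have h0 := hsinpos θ hθ
      have h1 : Real.sin (θ / 2) < 1 := by
        have := Real.strictMonoOn_sin (hmem θ hθ) (right_mem_Icc.2 (by linarith))
          (by linarith [hθ.2])
        simpa using this
      exact ⟨pow_pos h0 2, by simp only [hf_def]; nlinarith⟩
    · intro hx
      refine ⟨2 * Real.arcsin (Real.sqrt x), ⟨?_, ?_⟩, ?_⟩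
      · have := Real.arcsin_pos.2 (Real.sqrt_pos.2 hx.1)
        linarith
      · have : Real.arcsin (Real.sqrt x) < π / 2 :=
          Real.arcsin_lt_pi_div_two.2 (by
            rw [show (1:ℝ) = Real.sqrt 1 by simp]
            exact Real.sqrt_lt_sqrt hx.1.le hx.2)
        linarith
      · have h1 : Real.sqrt x ≤ 1 := by
          rw [show (1:ℝ) = Real.sqrt 1 by simp]
          exact Real.sqrt_le_sqrt hx.2.le
        simp only [hf_def]
        rw [show 2 * Real.arcsin (Real.sqrt x) / 2 = Real.arcsin (Real.sqrt x) by ring,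
          Real.sin_arcsin (le_trans (by norm_num) (Real.sqrt_nonneg x)) h1,
          Real.sq_sqrt hx.1.le]
  have hsub := MeasureTheory.integral_image_eq_integral_abs_deriv_smul measurableSet_Ioo
    hderiv hinj (fun x => x ^ (u - 1) * (1 - x) ^ (u - 1))
  rw [himg, aux_beta_real u hu] at hsub
  -- pointwise identity on Ioo 0 π
  have hpt : ∀ θ ∈ Ioo (0:ℝ) π,
      Real.sin θ ^ p = (2:ℝ) ^ p * (|f' θ| • (f θ ^ (u - 1) * (1 - f θ) ^ (u - 1))) := by
    intro θ hθ
    have ha := hsinpos θ hθ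
    have hb := hcospos θ hθ
    set a := Real.sin (θ / 2)
    set b := Real.cos (θ / 2)
    have h1f : (1 : ℝ) - f θ = b ^ 2 := by
      simp only [hf_def]
      have := Real.sin_sq_add_cos_sq (θ / 2)
      linarith
    have hsinθ : Real.sin θ = 2 * a * b := by
      rw [show θ = 2 * (θ / 2) by ring, Real.sin_two_mul]
    have hexp : ∀ c : ℝ, 0 < c → (c ^ 2 : ℝ) ^ (u - 1) = c ^ (p - 1) := by
      intro c hc
      rw [← Real.rpow_natCast c 2, ← Real.rpow_mul hc.le]
      norm_num
      rw [show (2 : ℝ) * (u - 1) = p - 1 by simp only [hu_def]; ring]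
    have habs : |f' θ| = a * b := by
      simp only [hf'_def]
      exact abs_of_pos (mul_pos ha hb)
    have hmul : ∀ c : ℝ, 0 < c → c * c ^ (p - 1) = c ^ p := by
      intro c hc
      conv_rhs => rw [show p = 1 + (p - 1) by ring]
      rw [Real.rpow_add hc, Real.rpow_one]
    rw [habs, smul_eq_mul, show f θ = a ^ 2 from rfl, h1f, hexp a ha, hexp b hb, hsinθ]
    rw [Real.mul_rpow (by positivity) hb.le, Real.mul_rpow (by positivity) ha.le]
    rw [← hmul a ha, ← hmul b hb]
    ring
  calc ∫ θ in Ioo (0:ℝ) π, Real.sin θ ^ p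
      = ∫ θ in Ioo (0:ℝ) π, (2:ℝ) ^ p * (|f' θ| • (f θ ^ (u - 1) * (1 - f θ) ^ (u - 1))) :=
        setIntegral_congr_fun measurableSet_Ioo hpt
    _ = (2:ℝ) ^ p * ∫ θ in Ioo (0:ℝ) π, |f' θ| • (f θ ^ (u - 1) * (1 - f θ) ^ (u - 1)) :=
        MeasureTheory.integral_const_mul _ _
    _ = (2:ℝ) ^ p * (Real.Gamma u ^ 2 / Real.Gamma (2 * u)) := by rw [← hsub]
    _ = Real.sqrt π * Real.Gamma ((p + 1) / 2) / Real.Gamma (p / 2 + 1) := by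
        have hΓu := Real.Gamma_pos_of_pos hu
        have hΓh : 0 < Real.Gamma (p / 2 + 1) := Real.Gamma_pos_of_pos (by linarith)
        have hΓ2u : 0 < Real.Gamma (2 * u) := Real.Gamma_pos_of_pos (by linarith)
        have hdup := Real.Gamma_mul_Gamma_add_half u
        rw [show u + 1 / 2 = p / 2 + 1 by simp only [hu_def]; ring,
          show (1 - 2 * u : ℝ) = -p by simp only [hu_def]; ring] at hdup
        have h2np : (2:ℝ) ^ (-p) * (2:ℝ) ^ p = 1 := by
          rw [← Real.rpow_add two_pos]; simp
        have hΓeq : Real.Gamma ((p + 1) / 2) = Real.Gamma u := rfl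
        rw [hΓeq, mul_div_assoc', div_eq_div_iff hΓ2u.ne' hΓh.ne']
        linear_combination ((2:ℝ) ^ p * Real.Gamma u) * hdup +
          (Real.sqrt π * Real.Gamma u * Real.Gamma (2 * u)) * h2np

/-- For `-2 < s < 1`, `s ≠ 0`, the mean value of `|1 - e^{iφ}|^(-s)` over the circle equals
`2^(-s) Γ((1-s)/2)/(√π Γ(1-s/2))`. -/
theorem circle_energy_integral (s : ℝ) (h1 : -2 < s) (h2 : s < 1) (h3 : s ≠ 0) :
    (1 / (2 * π)) * ∫ φ in (0 : ℝ)..(2 * π),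
        ‖1 - Complex.exp (Complex.I * φ)‖ ^ (-s)
      = 2 ^ (-s) * Real.Gamma ((1 - s) / 2) / (Real.sqrt π * Real.Gamma (1 - s / 2)) := by
  have hπ := Real.pi_pos
  have habs : ∀ φ ∈ Icc (0:ℝ) (2 * π),
      ‖1 - Complex.exp (Complex.I * φ)‖ = 2 * Real.sin (φ / 2) := by
    intro φ hφ
    rw [show Complex.I * φ = (φ : ℂ) * Complex.I by ring, Complex.exp_mul_I]
    rw [show (1 : ℂ) - (Complex.cos φ + Complex.sin φ * Complex.I)
        = ((1 - Real.cos φ : ℝ) : ℂ) + ((-Real.sin φ : ℝ) : ℂ) * Complex.I by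
      push_cast; ring]
    rw [Complex.norm_def, Complex.normSq_add_mul_I]
    rw [Real.sin_half_eq_sqrt hφ.1 hφ.2]
    rw [show (1 - Real.cos φ) ^ 2 + (-Real.sin φ) ^ 2
        = 2 ^ 2 * ((1 - Real.cos φ) / 2) by nlinarith [Real.sin_sq_add_cos_sq φ]]
    rw [Real.sqrt_mul (by positivity) _, Real.sqrt_sq (by norm_num : (0:ℝ) ≤ 2)]
  have step1 : (∫ φ in (0:ℝ)..(2 * π), ‖1 - Complex.exp (Complex.I * φ)‖ ^ (-s))
      = ∫ φ in (0:ℝ)..(2 * π), (2 * Real.sin (φ / 2)) ^ (-s) := by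
    refine intervalIntegral.integral_congr fun φ hφ => ?_
    rw [uIcc_of_le (by positivity)] at hφ
    rw [habs φ hφ]
  have step2 : (∫ φ in (0:ℝ)..(2 * π), (2 * Real.sin (φ / 2)) ^ (-s))
      = 2 * ∫ x in (0:ℝ)..π, (2 * Real.sin x) ^ (-s) := by
    have h := intervalIntegral.integral_comp_mul_left (a := (0:ℝ)) (b := π)
      (fun φ => (2 * Real.sin (φ / 2)) ^ (-s)) (two_ne_zero)
    simp only [mul_zero, smul_eq_mul] at h
    have h2' : (∫ x in (0:ℝ)..π, (2 * Real.sin (2 * x / 2)) ^ (-s))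
        = ∫ x in (0:ℝ)..π, (2 * Real.sin x) ^ (-s) := by
      apply intervalIntegral.integral_congr
      intro x _
      norm_num
    rw [h2'] at h
    linarith
  have hp : (-1:ℝ) < -s := by linarith
  have step3 : (∫ x in (0:ℝ)..π, (2 * Real.sin x) ^ (-s))
      = 2 ^ (-s) * (Real.sqrt π * Real.Gamma ((-s + 1) / 2) / Real.Gamma (-s / 2 + 1)) := by
    rw [intervalIntegral.integral_of_le hπ.le, MeasureTheory.integral_Ioc_eq_integral_Ioo]
    rw [show (∫ x in Ioo (0:ℝ) π, (2 * Real.sin x) ^ (-s))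
        = ∫ x in Ioo (0:ℝ) π, 2 ^ (-s) * Real.sin x ^ (-s) from
      setIntegral_congr_fun measurableSet_Ioo fun x hx => by
        rw [Real.mul_rpow (by norm_num) (Real.sin_nonneg_of_nonneg_of_le_pi hx.1.le hx.2.le)]]
    rw [MeasureTheory.integral_const_mul, aux_sin_rpow (-s) hp]
  rw [step1, step2, step3]
  rw [show (-s + 1) / 2 = (1 - s) / 2 by ring, show -s / 2 + 1 = 1 - s / 2 by ring]
  have hΓb : 0 < Real.Gamma (1 - s / 2) := Real.Gamma_pos_of_pos (by linarith)
  have hsπ : (0:ℝ) < Real.sqrt π := Real.sqrt_pos.2 hπ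
  have hππ : Real.sqrt π * Real.sqrt π = π := Real.mul_self_sqrt hπ.le
  have h2s : (0:ℝ) < (2:ℝ) ^ (-s) := Real.rpow_pos_of_pos two_pos _
  have key : ∀ A B c : ℝ, 0 < B → 0 < c →
      (1 / (2 * π)) * (2 * (c * (Real.sqrt π * A / B))) = c * A / (Real.sqrt π * B) := by
    intro A B c hB hc
    rw [eq_div_iff (by positivity : Real.sqrt π * B ≠ 0)]
    field_simp
    linear_combination A * hππ
  exact key _ _ _ hΓb h2s
end

section
/- For every integer k ≥ 1 and every x in [0,1], the Bernoulli polynomials satisfy |B_{2k}(x)| ≤ |B_{2k}| and |B_{2k+1}(x)| ≤ (2k+1)·|B_{2k}|, where B_n = B_n(0) are the Bernoulli numbers. -/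
open Real Set Nat

private lemma hasSum_abs_le_tsum {f g : ℕ → ℝ} {S : ℝ} (hf : HasSum f S)
    (hfg : ∀ n, |f n| ≤ g n) (hg : Summable g) : |S| ≤ ∑' n, g n := by
  have habs : Summable fun n => |f n| :=
    Summable.of_nonneg_of_le (fun n => abs_nonneg _) hfg hg
  calc |S| = ‖∑' n, f n‖ := by rw [hf.tsum_eq, Real.norm_eq_abs]
    _ ≤ ∑' n, ‖f n‖ := norm_tsum_le_tsum_norm (by simpa [Real.norm_eq_abs] using habs)
    _ ≤ ∑' n, g n := by
        refine Summable.tsum_le_tsum (fun n => ?_) (by simpa [Real.norm_eq_abs] using habs) hg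
        simpa [Real.norm_eq_abs] using hfg n

/-- Bernoulli polynomial inequalities on `[0,1]`: `|B_{2k}(x)| ≤ |B_{2k}|` and
`|B_{2k+1}(x)| ≤ (2k+1)|B_{2k}|` for `k ≥ 1`. -/
theorem bernoulli_poly_bounds (k : ℕ) (hk : 1 ≤ k) (x : ℝ) (hx : x ∈ Set.Icc (0 : ℝ) 1) :
    |((Polynomial.bernoulli (2 * k)).map (algebraMap ℚ ℝ)).eval x|
        ≤ |(bernoulli (2 * k) : ℝ)| ∧
    |((Polynomial.bernoulli (2 * k + 1)).map (algebraMap ℚ ℝ)).eval x|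
        ≤ (2 * k + 1) * |(bernoulli (2 * k) : ℝ)| := by
  have hk0 : k ≠ 0 := by omega
  have hx0 : (0 : ℝ) ∈ Set.Icc (0 : ℝ) 1 := Set.left_mem_Icc.mpr zero_le_one
  set C : ℝ := (-1 : ℝ) ^ (k + 1) * (2 * π) ^ (2 * k) / 2 / (2 * k)! with hCdef
  set C' : ℝ := (-1 : ℝ) ^ (k + 1) * (2 * π) ^ (2 * k + 1) / 2 / (2 * k + 1)! with hC'def
  set B : ℝ := ((Polynomial.bernoulli (2 * k)).map (algebraMap ℚ ℝ)).eval x with hBdef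
  set B' : ℝ := ((Polynomial.bernoulli (2 * k + 1)).map (algebraMap ℚ ℝ)).eval x with hB'def
  set B₀ : ℝ := (bernoulli (2 * k) : ℝ) with hB₀def
  have hc : HasSum (fun n : ℕ => 1 / (n : ℝ) ^ (2 * k) * Real.cos (2 * π * n * x)) (C * B) :=
    hasSum_one_div_nat_pow_mul_cos hk0 hx
  have hs : HasSum (fun n : ℕ => 1 / (n : ℝ) ^ (2 * k + 1) * Real.sin (2 * π * n * x))
      (C' * B') := hasSum_one_div_nat_pow_mul_sin hk0 hx
  have hc0 : HasSum (fun n : ℕ => 1 / (n : ℝ) ^ (2 * k)) (C * B₀) := by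
    have h := hasSum_one_div_nat_pow_mul_cos hk0 hx0
    rw [show ((Polynomial.bernoulli (2 * k)).map (algebraMap ℚ ℝ)).eval (0 : ℝ) = B₀ by
      rw [Polynomial.eval_zero_map, Polynomial.bernoulli_eval_zero, eq_ratCast]] at h
    simpa using h
  have hg : Summable fun n : ℕ => 1 / (n : ℝ) ^ (2 * k) := hc0.summable
  have htsum : ∑' n : ℕ, 1 / (n : ℝ) ^ (2 * k) = C * B₀ := hc0.tsum_eq
  have hCB₀_nonneg : 0 ≤ C * B₀ := by
    rw [← htsum]; exact tsum_nonneg fun n => by positivity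
  -- even bound
  have heven : |C * B| ≤ C * B₀ := by
    rw [← htsum]
    refine hasSum_abs_le_tsum hc (fun n => ?_) hg
    rw [abs_mul, abs_of_nonneg (by positivity : (0:ℝ) ≤ 1 / (n : ℝ) ^ (2 * k))]
    calc 1 / (n : ℝ) ^ (2 * k) * |Real.cos (2 * π * n * x)|
        ≤ 1 / (n : ℝ) ^ (2 * k) * 1 :=
          mul_le_mul_of_nonneg_left (Real.abs_cos_le_one _) (by positivity)
      _ = 1 / (n : ℝ) ^ (2 * k) := mul_one _
  -- odd bound
  have hodd : |C' * B'| ≤ C * B₀ := by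
    rw [← htsum]
    refine hasSum_abs_le_tsum hs (fun n => ?_) hg
    rw [abs_mul, abs_of_nonneg (by positivity : (0:ℝ) ≤ 1 / (n : ℝ) ^ (2 * k + 1))]
    calc 1 / (n : ℝ) ^ (2 * k + 1) * |Real.sin (2 * π * n * x)|
        ≤ 1 / (n : ℝ) ^ (2 * k + 1) * 1 :=
          mul_le_mul_of_nonneg_left (Real.abs_sin_le_one _) (by positivity)
      _ = 1 / (n : ℝ) ^ (2 * k + 1) := mul_one _
      _ ≤ 1 / (n : ℝ) ^ (2 * k) := by
          rcases Nat.eq_zero_or_pos n with rfl | hn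
          · simp [zero_pow, hk0, Nat.mul_ne_zero]
          · refine one_div_le_one_div_of_le (by positivity) ?_
            exact pow_le_pow_right₀ (by exact_mod_cast hn) (by omega)
  have hCabs : |C| = (2 * π) ^ (2 * k) / 2 / (2 * k)! := by
    rw [hCdef, abs_div, abs_div, abs_mul, abs_pow, abs_neg, abs_one, one_pow, one_mul,
      abs_of_nonneg (by positivity : (0:ℝ) ≤ (2 * π) ^ (2 * k)),
      abs_of_nonneg (by norm_num : (0:ℝ) ≤ 2),
      abs_of_nonneg (by positivity : (0:ℝ) ≤ ((2 * k)! : ℝ))]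
  have hC'abs : |C'| = (2 * π) ^ (2 * k + 1) / 2 / (2 * k + 1)! := by
    rw [hC'def, abs_div, abs_div, abs_mul, abs_pow, abs_neg, abs_one, one_pow, one_mul,
      abs_of_nonneg (by positivity : (0:ℝ) ≤ (2 * π) ^ (2 * k + 1)),
      abs_of_nonneg (by norm_num : (0:ℝ) ≤ 2),
      abs_of_nonneg (by positivity : (0:ℝ) ≤ ((2 * k + 1)! : ℝ))]
  have hCpos : 0 < |C| := by rw [hCabs]; positivity
  have hC'pos : 0 < |C'| := by rw [hC'abs]; positivity
  have hCB₀eq : C * B₀ = |C| * |B₀| := by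
    rw [← abs_mul]; exact (abs_of_nonneg hCB₀_nonneg).symm
  constructor
  · -- |B| ≤ |B₀|
    have : |C| * |B| ≤ |C| * |B₀| := by rw [← abs_mul, ← hCB₀eq]; exact heven
    exact le_of_mul_le_mul_left this hCpos
  · -- |B'| ≤ (2k+1) * |B₀|
    have hCle : |C| ≤ (2 * (k:ℝ) + 1) * |C'| := by
      rw [hCabs, hC'abs]
      have hfac : ((2 * k + 1)! : ℝ) = (2 * (k:ℝ) + 1) * (2 * k)! := by
        rw [Nat.factorial_succ]; push_cast; ring
      rw [hfac, pow_succ, div_div, div_div]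
      have hπ : (1:ℝ) ≤ 2 * π := by nlinarith [Real.pi_gt_three]
      have key : (2 * (k:ℝ) + 1) *
          ((2 * π) ^ (2 * k) * (2 * π) / (2 * ((2 * (k:ℝ) + 1) * ((2 * k)! : ℝ))))
          = (2 * π) ^ (2 * k) * (2 * π) / (2 * ((2 * k)! : ℝ)) := by
        have h1 : (2 * (k:ℝ) + 1) ≠ 0 := by positivity
        field_simp
      rw [key]
      gcongr
      exact le_mul_of_one_le_right (by positivity) hπ
    have step : |C'| * |B'| ≤ |C'| * ((2 * (k:ℝ) + 1) * |B₀|) := by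
      calc |C'| * |B'| = |C' * B'| := (abs_mul _ _).symm
        _ ≤ C * B₀ := hodd
        _ = |C| * |B₀| := hCB₀eq
        _ ≤ (2 * (k:ℝ) + 1) * |C'| * |B₀| :=
            mul_le_mul_of_nonneg_right hCle (abs_nonneg _)
        _ = |C'| * ((2 * (k:ℝ) + 1) * |B₀|) := by ring
    exact le_of_mul_le_mul_left step hC'pos
end

section
/- Let s be a real number with s > 0, s ∉ {2, 4, 6, …}, and define c_n(s) := (2/(2π)^s)·α_n(s)·ζ(s - 2n) (with ζ the analytically continued Riemann zeta function). Then for every fixed integer N ≥ 2, limsup_{n→∞} |c_n(s)·N^{-2n}| = ∞; that is, the asymptotic series Σ_n c_n(s) N^{1+s-2n} diverges. -/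
open Filter

open Real in
private lemma zeta_lb (x : ℝ) (hx : 2 ≤ x) : 1 ≤ ‖riemannZeta x‖ := by
  have hx1 : 1 < (x:ℂ).re := by simp; linarith
  have hsumR : Summable (fun n : ℕ => 1 / ((n:ℝ)+1) ^ x) := by
    have := (summable_nat_add_iff (f := fun n : ℕ => 1 / (n:ℝ) ^ x) 1).mpr
      (summable_one_div_nat_rpow.mpr (by linarith))
    simpa using this
  have key : riemannZeta x = ((∑' n : ℕ, 1 / ((n:ℝ)+1) ^ x : ℝ) : ℂ) := by
    rw [zeta_eq_tsum_one_div_nat_add_one_cpow hx1, Complex.ofReal_tsum]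
    congr 1; funext n
    have hb : ((n:ℂ) + 1) = (((n:ℝ) + 1 : ℝ) : ℂ) := by push_cast; ring
    rw [hb, ← Complex.ofReal_cpow (by positivity)]
    push_cast
    ring
  rw [key, Complex.norm_real, Real.norm_eq_abs]
  have h1 : (1:ℝ) ≤ ∑' n : ℕ, 1 / ((n:ℝ)+1) ^ x := by
    have := Summable.le_tsum hsumR 0 (fun i _ => by positivity)
    simpa using this
  rw [abs_of_nonneg (by linarith)]
  exact h1

open Real in
private lemma zeta_fe_lb (s : ℝ) (n : ℕ) (hn : s + 1 ≤ 2 * n) :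
    2 * (2*π) ^ (s - 1 - 2*n) * |Real.sin (π*s/2)| * Real.Gamma (1+2*n-s)
      ≤ ‖riemannZeta ((s:ℂ) - 2*n)‖ := by
  set w : ℝ := 1 + 2*n - s with hw
  have hw2 : 2 ≤ w := by simp only [hw]; linarith
  have harg : (s:ℂ) - 2*n = 1 - (w:ℂ) := by simp only [hw]; push_cast; ring
  have hfe := riemannZeta_one_sub (s := (w:ℂ))
    (fun m => by
      intro h
      have : w = -(m:ℝ) := by exact_mod_cast h
      have : (0:ℝ) ≤ (m:ℝ) := by positivity
      linarith)
    (by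
      intro h
      have : w = 1 := by exact_mod_cast h
      linarith)
  rw [harg, hfe]
  have hb : (2 * (π:ℂ)) = (((2*π : ℝ)) : ℂ) := by push_cast; ring
  have hcos : Complex.cos ((π:ℂ) * w / 2) = ((Real.cos (π * w / 2) : ℝ) : ℂ) := by
    rw [Complex.ofReal_cos]; push_cast; ring_nf
  have hcosval : |Real.cos (π * w / 2)| = |Real.sin (π * s / 2)| := by
    have h1 : π * w / 2 = (n:ℝ) * π - (π * s / 2 - π / 2) := by simp only [hw]; ring
    rw [h1, Real.cos_nat_mul_pi_sub]
    have h2 : Real.cos (π * s / 2 - π / 2) = Real.sin (π * s / 2) := by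
      rw [← Real.cos_neg, neg_sub, Real.cos_pi_div_two_sub]
    simp [h2, abs_mul]
  rw [norm_mul, norm_mul, norm_mul, norm_mul, hb,
    Complex.norm_cpow_eq_rpow_re_of_pos (by positivity),
    Complex.Gamma_ofReal, hcos, Complex.norm_real, Complex.norm_real, Real.norm_eq_abs,
    Real.norm_eq_abs, hcosval]
  have hre : (-(w:ℂ)).re = s - 1 - 2*n := by simp [hw]; ring
  rw [hre]
  have habs2 : ‖(2:ℂ)‖ = 2 := by norm_num
  rw [habs2]
  have hΓ : (0:ℝ) < Real.Gamma w := Real.Gamma_pos_of_pos (by linarith)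
  have hz := zeta_lb w hw2
  have hGabs : |Real.Gamma w| = Real.Gamma w := abs_of_pos hΓ
  rw [hGabs]
  calc 2 * (2*π) ^ (s - 1 - 2*n) * |Real.sin (π*s/2)| * Real.Gamma (1+2*n-s)
      = 2 * (2*π) ^ (s - 1 - 2*n) * Real.Gamma w * |Real.sin (π*s/2)| * 1 := by
        simp only [hw]; ring
    _ ≤ 2 * (2*π) ^ (s - 1 - 2*n) * Real.Gamma w * |Real.sin (π*s/2)| *
          ‖riemannZeta w‖ := by
        apply mul_le_mul_of_nonneg_left hz; positivity

open Real in
private lemma freq_large (s : ℝ) (hs : 0 < s) (g : ℂ → ℂ)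
    (hge : ∀ z ∈ Metric.ball (0:ℂ) 1, Complex.exp (g z) = sinc z)
    (α : ℕ → ℂ → ℂ)
    (hα : ∀ z ∈ Metric.ball (0:ℂ) 1,
      HasSum (fun n => α n (s:ℂ) * z ^ (2*n)) (Complex.exp (-(s:ℂ) * g z))) :
    ∃ᶠ n in atTop, ((1:ℝ)/2) ^ (2*n) ≤ ‖α n (s:ℂ)‖ := by
  by_contra hcon
  rw [Filter.not_frequently] at hcon
  obtain ⟨n₀, hn₀⟩ := eventually_atTop.mp hcon
  set bnd : ℕ → ℝ := fun n => (if n < n₀ then ‖α n (s:ℂ)‖ else 0) + ((1:ℝ)/2)^(2*n)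
    with hbnd
  have hgeo : Summable (fun n : ℕ => ((1:ℝ)/2)^(2*n)) := by
    have : (fun n : ℕ => ((1:ℝ)/2)^(2*n)) = fun n : ℕ => (((1:ℝ)/4))^n := by
      funext n; rw [pow_mul]; norm_num
    rw [this]
    exact summable_geometric_of_lt_one (by norm_num) (by norm_num)
  have hfin : Summable (fun n : ℕ => (if n < n₀ then ‖α n (s:ℂ)‖ else 0)) :=
    summable_of_ne_finset_zero (s := Finset.range n₀)
      (fun n hn => by rw [if_neg (by simpa using hn)])
  have hbnds : Summable bnd := hfin.add hgeo
  set B : ℝ := (∑ k ∈ Finset.range n₀, ‖α k (s:ℂ)‖) + ∑' n : ℕ, ((1:ℝ)/2)^(2*n)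
    with hB
  have htsum_bnd : ∑' n, bnd n = B := by
    rw [hbnd, Summable.tsum_add hfin hgeo, hB]
    congr 1
    rw [tsum_eq_sum (s := Finset.range n₀) (fun n hn => by rw [if_neg (by simpa using hn)])]
    exact Finset.sum_congr rfl (fun n hn => by rw [if_pos (by simpa using hn)])
  have key : ∀ x : ℝ, x ∈ Set.Ioo (0:ℝ) 1 →
      ‖Complex.exp (-(s:ℂ) * g x)‖ ≤ B := by
    intro x hx
    have hxball : (x:ℂ) ∈ Metric.ball 0 1 := by
      simp only [Metric.mem_ball, dist_zero_right, Complex.norm_real, Real.norm_eq_abs]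
      rw [abs_of_pos hx.1]; exact hx.2
    have hsum := hα x hxball
    have hxabs : ‖(x:ℂ)‖ = x := by
      rw [Complex.norm_real, Real.norm_eq_abs, abs_of_pos hx.1]
    have hxpow : ∀ n : ℕ, ‖(x:ℂ) ^ (2*n)‖ ≤ 1 := by
      intro n
      rw [norm_pow, hxabs]
      exact pow_le_one₀ hx.1.le hx.2.le
    have hnorm : ∀ n, ‖α n (s:ℂ) * (x:ℂ) ^ (2*n)‖ ≤ bnd n := by
      intro n
      rw [norm_mul, hbnd]
      rcases lt_or_ge n n₀ with h | h
      · simp only [if_pos h]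
        have := mul_le_mul_of_nonneg_left (hxpow n) (norm_nonneg (α n (s:ℂ)))
        nlinarith [pow_nonneg (by norm_num : (0:ℝ) ≤ 1/2) (2*n)]
      · simp only [if_neg (not_lt.mpr h), zero_add]
        have h1 : ‖α n (s:ℂ)‖ < ((1:ℝ)/2)^(2*n) := by
          have := hn₀ n h; exact lt_of_not_ge this
        calc ‖α n (s:ℂ)‖ * ‖(x:ℂ)^(2*n)‖
            ≤ ‖α n (s:ℂ)‖ * 1 :=
              mul_le_mul_of_nonneg_left (hxpow n) (norm_nonneg _)
          _ ≤ ((1:ℝ)/2)^(2*n) := by rw [mul_one]; exact h1.le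
    have hsumnorm : Summable (fun n => ‖α n (s:ℂ) * (x:ℂ) ^ (2*n)‖) :=
      Summable.of_nonneg_of_le (fun n => norm_nonneg _) hnorm hbnds
    calc ‖Complex.exp (-(s:ℂ) * g x)‖ = ‖∑' n, α n (s:ℂ) * (x:ℂ)^(2*n)‖ := by
          rw [hsum.tsum_eq]
      _ ≤ ∑' n, ‖α n (s:ℂ) * (x:ℂ)^(2*n)‖ := norm_tsum_le_tsum_norm hsumnorm
      _ ≤ ∑' n, bnd n := Summable.tsum_le_tsum hnorm hsumnorm hbnds
      _ = B := htsum_bnd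
  set t : ℝ → ℝ := fun x => ‖Complex.exp (g x)‖ with ht
  have habs_eq : ∀ x : ℝ, x ∈ Set.Ioo (0:ℝ) 1 →
      ‖Complex.exp (-(s:ℂ) * g x)‖ = ((t x) ^ s)⁻¹ := by
    intro x hx
    rw [Complex.norm_exp, ht]
    simp only
    rw [Complex.norm_exp]
    have hre : (-(s:ℂ) * g x).re = ((g (x:ℂ)).re) * (-s) := by
      simp [Complex.mul_re]; ring
    rw [hre, Real.exp_mul, Real.rpow_neg (Real.exp_pos _).le]
  have hteq : ∀ x : ℝ, x ∈ Set.Ioo (0:ℝ) 1 → t x = |Real.sin (π * x) / (π * x)| := by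
    intro x hx
    have hxball : (x:ℂ) ∈ Metric.ball 0 1 := by
      simp only [Metric.mem_ball, dist_zero_right, Complex.norm_real, Real.norm_eq_abs]
      rw [abs_of_pos hx.1]; exact hx.2
    rw [ht]
    simp only
    rw [hge x hxball, _root_.sinc, if_neg (by exact_mod_cast hx.1.ne')]
    have : (π:ℂ) * x = ((π * x : ℝ) : ℂ) := by push_cast; ring
    rw [this, ← Complex.ofReal_sin, ← Complex.ofReal_div, Complex.norm_real, Real.norm_eq_abs]
  have htend : Tendsto t (nhdsWithin 1 (Set.Ioo (0:ℝ) 1)) (nhds 0) := by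
    have hG : Tendsto (fun x : ℝ => |Real.sin (π * x) / (π * x)|)
        (nhdsWithin 1 (Set.Ioo (0:ℝ) 1)) (nhds 0) := by
      have hc : ContinuousAt (fun x : ℝ => |Real.sin (π * x) / (π * x)|) 1 := by
        have : ContinuousAt (fun x : ℝ => Real.sin (π * x) / (π * x)) 1 := by
          apply ContinuousAt.div
          · fun_prop
          · fun_prop
          · simpa using Real.pi_ne_zero
        exact this.abs
      have hval : |Real.sin (π * 1) / (π * 1)| = 0 := by simp
      have h2 : Tendsto (fun x : ℝ => |Real.sin (π * x) / (π * x)|)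
          (nhdsWithin 1 (Set.Ioo (0:ℝ) 1)) (nhds (|Real.sin (π * 1) / (π * 1)|)) :=
        hc.continuousWithinAt
      rwa [hval] at h2
    exact Tendsto.congr' (by
      filter_upwards [self_mem_nhdsWithin] with x hx
      exact (hteq x hx).symm) hG
  have htpos : ∀ x : ℝ, x ∈ Set.Ioo (0:ℝ) 1 → 0 < t x := fun x _ => by
    simp only [ht]
    exact norm_pos_iff.mpr (Complex.exp_ne_zero _)
  have htpows : Tendsto (fun x => (t x) ^ s) (nhdsWithin 1 (Set.Ioo (0:ℝ) 1))
      (nhdsWithin 0 (Set.Ioi 0)) := by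
    apply tendsto_nhdsWithin_of_tendsto_nhds_of_eventually_within
    · have hc : ContinuousAt (fun y : ℝ => y ^ s) 0 :=
        Real.continuousAt_rpow_const 0 s (Or.inr hs.le)
      have := hc.tendsto.comp htend
      simpa [Real.zero_rpow hs.ne', Function.comp_def] using this
    · filter_upwards [self_mem_nhdsWithin] with x hx
      exact Real.rpow_pos_of_pos (htpos x hx) s
  have hdiv : Tendsto (fun x => ((t x) ^ s)⁻¹) (nhdsWithin 1 (Set.Ioo (0:ℝ) 1)) atTop :=
    htpows.inv_tendsto_nhdsGT_zero
  have : NeBot (nhdsWithin (1:ℝ) (Set.Ioo (0:ℝ) 1)) := right_nhdsWithin_Ioo_neBot (by norm_num)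
  obtain ⟨x, hxB, hx⟩ := ((hdiv.eventually (eventually_gt_atTop B)).and self_mem_nhdsWithin).exists
  have := key x hx
  rw [habs_eq x hx] at this
  linarith

open Real in
/-- For real `s > 0` with `s ∉ {2, 4, 6, …}` and `c_n(s) = (2/(2π)^s) α_n(s) ζ(s - 2n)`,
for every fixed `N ≥ 2` one has `limsup_{n → ∞} |c_n(s) N^{-2n}| = ∞`. -/
theorem coeff_divergence (s : ℝ) (hs : 0 < s) (hs2 : ∀ M : ℕ, s ≠ 2 * (M + 1))
    (g : ℂ → ℂ) (hg : AnalyticOn ℂ g (Metric.ball 0 1)) (hg0 : g 0 = 0)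
    (hge : ∀ z ∈ Metric.ball (0 : ℂ) 1, Complex.exp (g z) = sinc z)
    (α : ℕ → ℂ → ℂ)
    (hα : ∀ t : ℂ, ∀ z ∈ Metric.ball (0 : ℂ) 1,
      HasSum (fun n => α n t * z ^ (2 * n)) (Complex.exp (-t * g z)))
    (N : ℕ) (hN : 2 ≤ N) :
    ∀ C : ℝ, ∃ᶠ n in atTop,
      C < ‖(2 / (2 * Real.pi : ℂ) ^ (s : ℂ)) * α n (s : ℂ)
            * riemannZeta ((s : ℂ) - 2 * n)‖ * (N : ℝ) ^ (-(2 * n : ℤ)) := by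
  intro C
  -- frequently large coefficients
  have hfreq := freq_large s hs g hge α (fun z hz => hα (s:ℂ) z hz)
  -- basic positive constants
  have hsin : 0 < |Real.sin (π*s/2)| := by
    rw [abs_pos]
    intro h
    obtain ⟨m, hm⟩ := Real.sin_eq_zero_iff.mp h
    have hπ : (0:ℝ) < π := Real.pi_pos
    have hsm : s = 2 * m := by
      have := hm
      field_simp at this
      nlinarith [this]
    have hm1 : 1 ≤ m := by
      by_contra hmle
      push_neg at hmle
      have : (m:ℝ) ≤ 0 := by exact_mod_cast Int.lt_add_one_iff.mp hmle
      nlinarith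
    obtain ⟨M, hM⟩ : ∃ M : ℕ, m = (M:ℤ) + 1 := ⟨(m-1).toNat, by omega⟩
    exact hs2 M (by rw [hsm, hM]; push_cast; ring)
  set P : ℝ := ‖2 / (2 * Real.pi : ℂ) ^ (s : ℂ)‖ with hPdef
  have hPeq : P = 2 / (2*π) ^ s := by
    rw [hPdef, norm_div, show (2 * (π:ℂ)) = (((2*π : ℝ)) : ℂ) by push_cast; ring,
      Complex.norm_cpow_eq_rpow_re_of_pos (by positivity)]
    norm_num
  have hP : 0 < P := by rw [hPeq]; positivity
  set K : ℝ := P * (2 * (2*π)^(s-1) * |Real.sin (π*s/2)|) with hKdef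
  have hK : 0 < K := by rw [hKdef]; positivity
  set k : ℕ := ⌈s⌉₊ + 1 with hkdef
  have hsk : s < k := by
    have := Nat.le_ceil s
    have : s ≤ (⌈s⌉₊ : ℝ) := this
    rw [hkdef]; push_cast; linarith
  set a : ℝ := 2 * (2*π) * N with hadef
  have ha : 0 < a := by
    rw [hadef]
    have : (0:ℝ) < N := by positivity
    positivity
  -- divergence of factorial over geometric
  have h0 : Tendsto (fun m : ℕ => a^m / (Nat.factorial m : ℝ)) atTop (nhds 0) :=
    FloorSemiring.tendsto_pow_div_factorial_atTop a
  have h1 : Tendsto (fun m : ℕ => (a^m / (Nat.factorial m : ℝ))⁻¹) atTop atTop :=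
    Filter.Tendsto.inv_tendsto_nhdsGT_zero
      (tendsto_nhdsWithin_of_tendsto_nhds_of_eventually_within _ h0
        (Eventually.of_forall (fun m => by
          have : (0:ℝ) < (Nat.factorial m : ℝ) := by exact_mod_cast Nat.factorial_pos m
          simp only [Set.mem_Ioi]
          positivity)))
  have h2 : Tendsto (fun m : ℕ => (K / a^k) * ((Nat.factorial m : ℝ) / a^m)) atTop atTop := by
    apply Tendsto.const_mul_atTop (by positivity)
    refine h1.congr (fun m => ?_)
    rw [inv_div]
  have h3 : Tendsto (fun n : ℕ => 2*n - k) atTop atTop := by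
    apply tendsto_atTop_mono' atTop (f₁ := id)
    · filter_upwards [eventually_ge_atTop k] with n hn
      simp only [id]
      omega
    · exact tendsto_id
  have h4 := h2.comp h3
  have ev3 : ∀ᶠ n : ℕ in atTop, C < (K / a^k) * ((Nat.factorial (2*n-k) : ℝ) / a^(2*n-k)) :=
    h4.eventually (eventually_gt_atTop C)
  -- combine
  refine (hfreq.and_eventually (ev3.and (eventually_ge_atTop (k+2)))).mono ?_
  rintro n ⟨hq, hC, hn2⟩
  set m : ℕ := 2*n - k with hmdef
  have hkm : m + k = 2*n := by omega
  have hmcast : (m:ℝ) = 2*(n:ℝ) - k := by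
    have : (m:ℕ) = 2*n - k := rfl
    push_cast [hmdef, Nat.cast_sub (by omega : k ≤ 2*n)]
    ring
  have hm4 : 4 ≤ m := by omega
  -- the key chain of inequalities
  have hid : (K / a^k) * ((Nat.factorial m : ℝ) / a^m) = K * (Nat.factorial m : ℝ) * (a^(2*n))⁻¹ := by
    rw [← hkm, pow_add]
    have h5 : a^m ≠ 0 := by positivity
    have h6 : a^k ≠ 0 := by positivity
    field_simp
    ring
  rw [hid] at hC
  -- zeta lower bound
  have hs1 : s + 1 ≤ 2 * (n:ℝ) := by
    have : (k:ℝ) + 2 ≤ (n:ℝ) := by exact_mod_cast hn2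
    linarith
  have hζ := zeta_fe_lb s n hs1
  -- Gamma ≥ factorial
  have hΓ : (Nat.factorial m : ℝ) ≤ Real.Gamma (1 + 2*(n:ℝ) - s) := by
    have heq : (Nat.factorial m : ℝ) = Real.Gamma ((m:ℝ) + 1) := (Real.Gamma_nat_eq_factorial m).symm
    rw [heq]
    apply (Real.Gamma_strictMonoOn_Ici.monotoneOn)
    · simp only [Set.mem_Ici]
      have : (4:ℝ) ≤ (m:ℝ) := by exact_mod_cast hm4
      linarith
    · simp only [Set.mem_Ici]
      linarith
    · rw [hmcast]
      have : (k:ℝ) ≥ s := hsk.le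
      linarith
  -- rpow conversion
  have hconv : (2*π:ℝ)^(s-1-2*(n:ℝ)) = (2*π)^(s-1) * (((2*π:ℝ))^(2*n:ℕ))⁻¹ := by
    rw [show s-1-2*(n:ℝ) = (s-1) - ((2*n:ℕ):ℝ) by push_cast; ring,
      Real.rpow_sub (by positivity), Real.rpow_natCast, div_eq_mul_inv]
  -- rewrite the goal
  rw [norm_mul, norm_mul,
    show (-(2 * (n:ℤ))) = -((2*n : ℕ) : ℤ) by push_cast; ring, zpow_neg, zpow_natCast]
  have hRlow : 2 * (2*π)^(s-1) * |Real.sin (π*s/2)| * (((2*π:ℝ))^(2*n:ℕ))⁻¹ * (Nat.factorial m : ℝ)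
      ≤ ‖riemannZeta ((s:ℂ) - 2*(n:ℕ))‖ := by
    refine le_trans ?_ hζ
    rw [hconv]
    have hnn : (0:ℝ) ≤ 2 * (2*π)^(s-1) * (((2*π:ℝ))^(2*n:ℕ))⁻¹ * |Real.sin (π*s/2)| := by
      positivity
    calc 2 * (2*π)^(s-1) * |Real.sin (π*s/2)| * (((2*π:ℝ))^(2*n:ℕ))⁻¹ * (Nat.factorial m : ℝ)
        = (2 * (2*π)^(s-1) * (((2*π:ℝ))^(2*n:ℕ))⁻¹ * |Real.sin (π*s/2)|) * (Nat.factorial m : ℝ) := by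
          ring
      _ ≤ (2 * (2*π)^(s-1) * (((2*π:ℝ))^(2*n:ℕ))⁻¹ * |Real.sin (π*s/2)|) *
          Real.Gamma (1 + 2*(n:ℝ) - s) := mul_le_mul_of_nonneg_left hΓ hnn
      _ = 2 * ((2*π)^(s-1) * (((2*π:ℝ))^(2*n:ℕ))⁻¹) * |Real.sin (π*s/2)| *
          Real.Gamma (1 + 2*(n:ℝ) - s) := by ring
  have hNpos : (0:ℝ) < (N:ℝ) := by positivity
  have e1 : K * (Nat.factorial m : ℝ) * (a^(2*n))⁻¹
      = P * ((1/2:ℝ)^(2*n)) *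
        (2 * (2*π)^(s-1) * |Real.sin (π*s/2)| * (((2*π:ℝ))^(2*n:ℕ))⁻¹ * (Nat.factorial m : ℝ)) *
        (((N:ℝ))^(2*n))⁻¹ := by
    have hae : a^(2*n) = 2^(2*n) * (2*π)^(2*n) * (N:ℝ)^(2*n) := by
      rw [hadef, mul_pow, mul_pow]
    rw [hae, hKdef]
    have p1 : ((2:ℝ))^(2*n) ≠ 0 := by positivity
    have p2 : ((2*π:ℝ))^(2*n) ≠ 0 := by positivity
    have p3 : ((N:ℝ))^(2*n) ≠ 0 := by positivity
    field_simp
    ring_nf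
    rw [← mul_pow]; norm_num
  calc C < K * (Nat.factorial m : ℝ) * (a^(2*n))⁻¹ := hC
    _ = P * ((1/2:ℝ)^(2*n)) *
        (2 * (2*π)^(s-1) * |Real.sin (π*s/2)| * (((2*π:ℝ))^(2*n:ℕ))⁻¹ * (Nat.factorial m : ℝ)) *
        (((N:ℝ))^(2*n))⁻¹ := e1
    _ ≤ P * ‖α n (s:ℂ)‖ * ‖riemannZeta ((s:ℂ) - 2*(n:ℕ))‖ *
        (((N:ℝ))^(2*n))⁻¹ := by
        have hfact : (0:ℝ) ≤ (Nat.factorial m : ℝ) := by positivity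
        gcongr
end
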